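/- Let ζ_λ, ζ₀ : [0,∞) → [0,∞) be measurable with 0 ≤ ζ_λ(r²) ≤ K r^{3+γ} and |ζ_λ(r²) - ζ₀(r²)| ≤ K' r^{3+γ} for all r ≥ 0 and λ ∈ (0,1], and suppose sup_{0≤r≤R} |ζ_λ(r²) - ζ₀(r²)| → 0 as λ → 0 for each R > 0. For integrable f, g define I_λ(f,g) = ∫∫ f(v) g(v₊) ζ_λ(|v-v₊|²) dv dv₊ and I₀ similarly with ζ₀. Then for any δ > 0 there is a constant A_γ (depending only on γ) such that for every ε > 0 there exists λ₀ ∈ (0,1) with: for all λ ∈ (0,λ₀) and all f₁,f₂,g₁,g₂ with finite weighted L¹ norms, |I_λ(f₁,g₁) - I₀(f₂,g₂)| ≤ A_γ (‖f₁-f₂‖_{L¹_{3+γ}} ‖g₁‖_{L¹_{3+γ}} + ‖g₁-g₂‖_{L¹_{3+γ}} ‖f₂‖_{L¹_{3+γ}}) + ε (‖f₂‖_{L¹}‖g₂‖_{L¹} + ‖f₂‖_{L¹_{3+γ+δ}}‖g₂‖_{L¹_{3+γ+δ}}). -/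

import Mathlib

open Real Set MeasureTheory Filter

abbrev E3 := EuclideanSpace ℝ (Fin 3)

/-- Weighted `L¹` norm `‖f‖_{L¹_k} = ∫ |f(v)| ⟨v⟩^k dv`. -/
noncomputable def wL1 (f : E3 → ℝ) (k : ℝ) : ℝ :=
  ∫ v : E3, |f v| * (1 + ‖v‖ ^ 2) ^ (k / 2)

/-- The energy dissipation functional `I(f, g) = ∫∫ f(v) g(v*) ζ(|v-v*|²) dv dv*`. -/
noncomputable def dissip (ζ : ℝ → ℝ) (f g : E3 → ℝ) : ℝ :=
  ∫ v : E3, ∫ w : E3, f v * g w * ζ (‖v - w‖ ^ 2)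

lemma weight_pt (p : ℝ) (hp : 0 ≤ p) (v w : E3) :
    ‖v - w‖ ^ p ≤ 2 ^ (p/2) * ((1 + ‖v‖^2) ^ (p/2) * (1 + ‖w‖^2) ^ (p/2)) := by
  have h0 : ‖v - w‖ * ‖v - w‖ ≤ (‖v‖ + ‖w‖) * (‖v‖ + ‖w‖) :=
    mul_self_le_mul_self (norm_nonneg _) (norm_sub_le v w)
  have h1 : ‖v - w‖^2 ≤ 2 * ((1 + ‖v‖^2) * (1 + ‖w‖^2)) := by
    nlinarith [sq_nonneg (‖v‖ - ‖w‖), sq_nonneg (‖v‖ * ‖w‖), norm_nonneg v, norm_nonneg w]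
  have hvw : (0:ℝ) ≤ ‖v - w‖ := norm_nonneg _
  calc ‖v - w‖ ^ p = ((‖v - w‖ ^ (2:ℕ) : ℝ)) ^ (p/2) := by
        rw [← Real.rpow_natCast (‖v - w‖) 2, ← Real.rpow_mul hvw]
        norm_num
        congr 1
        ring
    _ ≤ (2 * ((1 + ‖v‖^2) * (1 + ‖w‖^2))) ^ (p/2) :=
        Real.rpow_le_rpow (by positivity) h1 (by positivity)
    _ = 2 ^ (p/2) * ((1 + ‖v‖^2) ^ (p/2) * (1 + ‖w‖^2) ^ (p/2)) := by
        rw [Real.mul_rpow (by norm_num) (by positivity), Real.mul_rpow (by positivity) (by positivity)]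

lemma wmeas {f : E3 → ℝ} (hf : Measurable f) (p : ℝ) :
    Measurable (fun v : E3 => |f v| * (1 + ‖v‖^2) ^ (p/2)) := by
  apply hf.abs.mul
  exact ((continuous_const.add ((continuous_norm).pow 2)).rpow_const
    (fun v => Or.inl (by positivity : (0:ℝ) < 1 + ‖v‖^2).ne')).measurable

lemma weight_int_mono {f : E3 → ℝ} (hf : Measurable f) {p q : ℝ} (hp : 0 ≤ p) (hpq : p ≤ q)
    (hq : Integrable (fun v : E3 => |f v| * (1 + ‖v‖^2) ^ (q/2))) :
    Integrable (fun v : E3 => |f v| * (1 + ‖v‖^2) ^ (p/2)) := by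
  refine hq.mono' (wmeas hf p).aestronglyMeasurable ?_
  filter_upwards with v
  rw [Real.norm_eq_abs, abs_of_nonneg (by positivity)]
  have h1 : (1:ℝ) ≤ 1 + ‖v‖^2 := le_add_of_nonneg_right (by positivity)
  exact mul_le_mul_of_nonneg_left
    (Real.rpow_le_rpow_of_exponent_le h1 (by linarith)) (abs_nonneg _)

lemma abs_int {f : E3 → ℝ} (hf : Measurable f) {q : ℝ} (hq0 : 0 ≤ q)
    (hq : Integrable (fun v : E3 => |f v| * (1 + ‖v‖^2) ^ (q/2))) :
    Integrable (fun v : E3 => |f v|) := by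
  refine hq.mono' hf.abs.aestronglyMeasurable ?_
  filter_upwards with v
  rw [Real.norm_eq_abs, abs_abs]
  have h1 : (1:ℝ) ≤ (1 + ‖v‖^2) ^ (q/2) :=
    Real.one_le_rpow (le_add_of_nonneg_right (by positivity)) (by linarith)
  nlinarith [abs_nonneg (f v)]

lemma wL1_nonneg (f : E3 → ℝ) (k : ℝ) : 0 ≤ wL1 f k :=
  integral_nonneg fun v => by positivity

lemma sub_weight_int {f₁ f₂ : E3 → ℝ} (hf₁ : Measurable f₁) (hf₂ : Measurable f₂) (p : ℝ)
    (h₁ : Integrable (fun v : E3 => |f₁ v| * (1 + ‖v‖^2) ^ (p/2)))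
    (h₂ : Integrable (fun v : E3 => |f₂ v| * (1 + ‖v‖^2) ^ (p/2))) :
    Integrable (fun v : E3 => |f₁ v - f₂ v| * (1 + ‖v‖^2) ^ (p/2)) := by
  refine (h₁.add h₂).mono' (wmeas (hf₁.sub hf₂) p).aestronglyMeasurable ?_
  filter_upwards with v
  rw [Real.norm_eq_abs, abs_of_nonneg (by positivity)]
  simp only [Pi.add_apply]
  have hw : (0:ℝ) ≤ (1 + ‖v‖^2) ^ (p/2) := by positivity
  calc |f₁ v - f₂ v| * (1 + ‖v‖^2) ^ (p/2)
      ≤ (|f₁ v| + |f₂ v|) * (1 + ‖v‖^2) ^ (p/2) :=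
        mul_le_mul_of_nonneg_right (abs_sub _ _) hw
    _ = |f₁ v| * (1 + ‖v‖^2) ^ (p/2) + |f₂ v| * (1 + ‖v‖^2) ^ (p/2) := by ring

lemma core (p c : ℝ) (hp : 0 ≤ p) (hc : 0 ≤ c) (ξ : ℝ → ℝ) (hξm : Measurable ξ)
    (hξ : ∀ r ≥ (0:ℝ), |ξ (r^2)| ≤ c * r ^ p)
    (f g : E3 → ℝ) (hf : Measurable f) (hg : Measurable g)
    (hfi : Integrable (fun v : E3 => |f v| * (1 + ‖v‖^2) ^ (p/2)))
    (hgi : Integrable (fun v : E3 => |g v| * (1 + ‖v‖^2) ^ (p/2))) :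
    Integrable (fun z : E3 × E3 => f z.1 * g z.2 * ξ (‖z.1 - z.2‖^2))
      ((volume : Measure E3).prod volume)
    ∧ dissip ξ f g = ∫ z : E3 × E3, f z.1 * g z.2 * ξ (‖z.1 - z.2‖^2)
        ∂((volume : Measure E3).prod volume)
    ∧ |dissip ξ f g| ≤ c * 2 ^ (p/2) * (wL1 f p * wL1 g p) := by
  set B : E3 × E3 → ℝ := fun z =>
    c * 2 ^ (p/2) * ((|f z.1| * (1 + ‖z.1‖^2) ^ (p/2)) * (|g z.2| * (1 + ‖z.2‖^2) ^ (p/2))) with hB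
  have hBint : Integrable B ((volume : Measure E3).prod volume) :=
    (hfi.mul_prod hgi).const_mul _
  have hFmeas : Measurable (fun z : E3 × E3 => f z.1 * g z.2 * ξ (‖z.1 - z.2‖^2)) := by
    refine ((hf.comp measurable_fst).mul (hg.comp measurable_snd)).mul ?_
    exact hξm.comp (((continuous_fst.sub continuous_snd).norm.pow 2).measurable)
  have hbound : ∀ z : E3 × E3, |f z.1 * g z.2 * ξ (‖z.1 - z.2‖^2)| ≤ B z := by
    intro z
    have h1 : |ξ (‖z.1 - z.2‖^2)| ≤ c * ‖z.1 - z.2‖ ^ p := hξ _ (norm_nonneg _)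
    have h2 := weight_pt p hp z.1 z.2
    have := abs_nonneg (f z.1)
    have := abs_nonneg (g z.2)
    have h3 : (0:ℝ) ≤ ‖z.1 - z.2‖ ^ p := Real.rpow_nonneg (norm_nonneg _) p
    calc |f z.1 * g z.2 * ξ (‖z.1 - z.2‖^2)|
        = |f z.1| * |g z.2| * |ξ (‖z.1 - z.2‖^2)| := by rw [abs_mul, abs_mul]
      _ ≤ |f z.1| * |g z.2| * (c * ‖z.1 - z.2‖ ^ p) := by
          exact mul_le_mul_of_nonneg_left h1 (by positivity)
      _ ≤ |f z.1| * |g z.2| * (c * (2 ^ (p/2) * ((1 + ‖z.1‖^2) ^ (p/2) * (1 + ‖z.2‖^2) ^ (p/2)))) := by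
          refine mul_le_mul_of_nonneg_left (mul_le_mul_of_nonneg_left h2 hc) (by positivity)
      _ = B z := by rw [hB]; ring
  have hFint : Integrable (fun z : E3 × E3 => f z.1 * g z.2 * ξ (‖z.1 - z.2‖^2))
      ((volume : Measure E3).prod volume) := by
    refine hBint.mono' hFmeas.aestronglyMeasurable ?_
    filter_upwards with z
    rw [Real.norm_eq_abs]; exact hbound z
  have heq : dissip ξ f g = ∫ z : E3 × E3, f z.1 * g z.2 * ξ (‖z.1 - z.2‖^2)
      ∂((volume : Measure E3).prod volume) := by
    rw [dissip]
    exact integral_integral hFint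
  refine ⟨hFint, heq, ?_⟩
  rw [heq]
  calc |∫ z : E3 × E3, f z.1 * g z.2 * ξ (‖z.1 - z.2‖^2) ∂((volume : Measure E3).prod volume)|
      ≤ ∫ z : E3 × E3, |f z.1 * g z.2 * ξ (‖z.1 - z.2‖^2)| ∂((volume : Measure E3).prod volume) :=
        by simpa only [Real.norm_eq_abs] using
          norm_integral_le_integral_norm (μ := (volume : Measure E3).prod volume)
            (fun z : E3 × E3 => f z.1 * g z.2 * ξ (‖z.1 - z.2‖^2))
    _ ≤ ∫ z : E3 × E3, B z ∂((volume : Measure E3).prod volume) :=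
        integral_mono hFint.abs hBint hbound
    _ = c * 2 ^ (p/2) * (wL1 f p * wL1 g p) := by
        rw [hB, integral_const_mul,
          integral_prod_mul (f := fun v : E3 => |f v| * (1 + ‖v‖^2) ^ (p/2))
            (g := fun v : E3 => |g v| * (1 + ‖v‖^2) ^ (p/2))]
        rfl

theorem stmt14 (γ K K' : ℝ) (hγ : 0 < γ) (hK : 0 < K) (hK' : 0 < K')
    (ζ : ℝ → ℝ → ℝ) (ζ₀ : ℝ → ℝ)
    (hmeas : ∀ lam, Measurable (ζ lam)) (hmeas0 : Measurable ζ₀)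
    (hbnd : ∀ lam ∈ Set.Ioc (0 : ℝ) 1, ∀ r ≥ (0 : ℝ),
      0 ≤ ζ lam (r ^ 2) ∧ ζ lam (r ^ 2) ≤ K * r ^ (3 + γ))
    (hdiff : ∀ lam ∈ Set.Ioc (0 : ℝ) 1, ∀ r ≥ (0 : ℝ),
      |ζ lam (r ^ 2) - ζ₀ (r ^ 2)| ≤ K' * r ^ (3 + γ))
    (hconv : ∀ R > (0 : ℝ),
      Tendsto (fun lam => ⨆ r ∈ Set.Icc (0 : ℝ) R, |ζ lam (r ^ 2) - ζ₀ (r ^ 2)|)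
        (nhdsWithin 0 (Set.Ioi 0)) (nhds 0)) :
    ∃ A > (0 : ℝ), ∀ δ > (0 : ℝ), ∀ ε > (0 : ℝ), ∃ lam₀ ∈ Set.Ioo (0 : ℝ) 1,
      ∀ lam ∈ Set.Ioo (0 : ℝ) lam₀, ∀ f₁ f₂ g₁ g₂ : E3 → ℝ,
        Measurable f₁ → Measurable f₂ → Measurable g₁ → Measurable g₂ →
        Integrable (fun v : E3 => |f₁ v| * (1 + ‖v‖ ^ 2) ^ ((3 + γ + δ) / 2)) →
        Integrable (fun v : E3 => |f₂ v| * (1 + ‖v‖ ^ 2) ^ ((3 + γ + δ) / 2)) →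
        Integrable (fun v : E3 => |g₁ v| * (1 + ‖v‖ ^ 2) ^ ((3 + γ + δ) / 2)) →
        Integrable (fun v : E3 => |g₂ v| * (1 + ‖v‖ ^ 2) ^ ((3 + γ + δ) / 2)) →
        |dissip (ζ lam) f₁ g₁ - dissip ζ₀ f₂ g₂|
          ≤ A * (wL1 (f₁ - f₂) (3 + γ) * wL1 g₁ (3 + γ)
                + wL1 (g₁ - g₂) (3 + γ) * wL1 f₂ (3 + γ))
            + ε * (wL1 f₂ 0 * wL1 g₂ 0
                + wL1 f₂ (3 + γ + δ) * wL1 g₂ (3 + γ + δ)) := by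
  have hp : (0:ℝ) ≤ 3 + γ := by linarith
  refine ⟨K * 2 ^ ((3 + γ)/2), mul_pos hK (Real.rpow_pos_of_pos two_pos _), ?_⟩
  intro δ hδ ε hε
  have hq0 : (0:ℝ) ≤ 3 + γ + δ := by linarith
  have hpq : (3:ℝ) + γ ≤ 3 + γ + δ := by linarith
  set R : ℝ := max 1 ((K' * 2 ^ ((3 + γ + δ)/2) / ε) ^ (1/δ)) with hRdef
  have hR1 : (1:ℝ) ≤ R := le_max_left _ _
  have hRpos : (0:ℝ) < R := lt_of_lt_of_le one_pos hR1
  have hRδ : (0:ℝ) < R ^ δ := Real.rpow_pos_of_pos hRpos δ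
  set M : ℝ := K' * 2 ^ ((3 + γ + δ)/2) / R ^ δ with hMdef
  have hM0 : 0 ≤ M := by positivity
  have hx : (0:ℝ) ≤ K' * 2 ^ ((3 + γ + δ)/2) / ε := by positivity
  have h1 : K' * 2 ^ ((3 + γ + δ)/2) / ε ≤ R ^ δ := by
    calc K' * 2 ^ ((3 + γ + δ)/2) / ε
        = ((K' * 2 ^ ((3 + γ + δ)/2) / ε) ^ (1/δ)) ^ δ := by
          rw [← Real.rpow_mul hx, one_div_mul_cancel hδ.ne', Real.rpow_one]
      _ ≤ R ^ δ := Real.rpow_le_rpow (Real.rpow_nonneg hx _) (le_max_right _ _) hδ.le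
  have hM : M ≤ ε := by
    rw [hMdef, div_le_iff₀ hRδ]
    have h2 := mul_le_mul_of_nonneg_left h1 hε.le
    have h3 : ε * (K' * 2 ^ ((3 + γ + δ)/2) / ε) = K' * 2 ^ ((3 + γ + δ)/2) := by field_simp
    linarith
  have hev := (hconv R hRpos).eventually_lt_const hε
  rw [eventually_nhdsWithin_iff, Metric.eventually_nhds_iff] at hev
  obtain ⟨η, hη, hball⟩ := hev
  refine ⟨min (η/2) (1/2), ⟨by positivity, lt_of_le_of_lt (min_le_right _ _) (by norm_num)⟩, ?_⟩
  intro lam hlam f₁ f₂ g₁ g₂ hmf₁ hmf₂ hmg₁ hmg₂ hif₁ hif₂ hig₁ hig₂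
  have hlam1 : lam ∈ Set.Ioc (0:ℝ) 1 := by
    refine ⟨hlam.1, ?_⟩
    have := hlam.2
    have := min_le_right (η/2) (1/2)
    linarith
  -- sup bound
  have hS : (⨆ r ∈ Set.Icc (0:ℝ) R, |ζ lam (r ^ 2) - ζ₀ (r ^ 2)|) < ε := by
    apply hball
    · rw [Real.dist_eq, sub_zero, abs_of_pos hlam.1]
      have := hlam.2
      have := min_le_left (η/2) (1/2)
      linarith
    · exact hlam.1
  have hsup : ∀ r, 0 ≤ r → r ≤ R → |ζ lam (r ^ 2) - ζ₀ (r ^ 2)| ≤ ε := by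
    intro r hr0 hrR
    have hbdd : BddAbove (Set.range fun r' : ℝ =>
        ⨆ _ : r' ∈ Set.Icc (0:ℝ) R, |ζ lam (r' ^ 2) - ζ₀ (r' ^ 2)|) := by
      refine ⟨max 0 (K' * R ^ (3 + γ)), ?_⟩
      rintro x ⟨r', rfl⟩
      by_cases hr' : r' ∈ Set.Icc (0:ℝ) R
      · show (⨆ _ : r' ∈ Set.Icc (0:ℝ) R, |ζ lam (r' ^ 2) - ζ₀ (r' ^ 2)|) ≤ _
        rw [ciSup_pos hr']
        refine le_max_of_le_right ?_
        calc |ζ lam (r' ^ 2) - ζ₀ (r' ^ 2)| ≤ K' * r' ^ (3 + γ) := hdiff lam hlam1 r' hr'.1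
          _ ≤ K' * R ^ (3 + γ) :=
            mul_le_mul_of_nonneg_left (Real.rpow_le_rpow hr'.1 hr'.2 hp) hK'.le
      · show (⨆ _ : r' ∈ Set.Icc (0:ℝ) R, |ζ lam (r' ^ 2) - ζ₀ (r' ^ 2)|) ≤ _
        haveI : IsEmpty (r' ∈ Set.Icc (0:ℝ) R) := ⟨hr'⟩
        rw [iSup_of_isEmpty]
        exact le_max_left _ _
    have hle := le_ciSup hbdd r
    rw [ciSup_pos (Set.mem_Icc.mpr ⟨hr0, hrR⟩)] at hle
    exact le_of_lt (lt_of_le_of_lt hle hS)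
  -- bounds on kernels
  have hzlam : ∀ r ≥ (0:ℝ), |ζ lam (r ^ 2)| ≤ K * r ^ (3 + γ) := by
    intro r hr
    obtain ⟨ha, hb⟩ := hbnd lam hlam1 r hr
    rw [abs_of_nonneg ha]; exact hb
  have hzd : ∀ r ≥ (0:ℝ), |(fun s => ζ lam s - ζ₀ s) (r ^ 2)| ≤ K' * r ^ (3 + γ) :=
    fun r hr => hdiff lam hlam1 r hr
  have hz0 : ∀ r ≥ (0:ℝ), |ζ₀ (r ^ 2)| ≤ (K + K') * r ^ (3 + γ) := by
    intro r hr
    obtain ⟨ha, hb⟩ := hbnd 1 ⟨one_pos, le_refl 1⟩ r hr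
    have hc := hdiff 1 ⟨one_pos, le_refl 1⟩ r hr
    have habs : |ζ₀ (r ^ 2)| ≤ |ζ 1 (r ^ 2)| + |ζ 1 (r ^ 2) - ζ₀ (r ^ 2)| := by
      calc |ζ₀ (r ^ 2)| = |ζ 1 (r ^ 2) - (ζ 1 (r ^ 2) - ζ₀ (r ^ 2))| := by rw [sub_sub_cancel]
        _ ≤ _ := abs_sub _ _
    rw [abs_of_nonneg ha] at habs
    rw [add_mul]
    linarith
  -- integrability at exponent 3+γ
  have hif₁' := weight_int_mono hmf₁ hp hpq hif₁
  have hif₂' := weight_int_mono hmf₂ hp hpq hif₂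
  have hig₁' := weight_int_mono hmg₁ hp hpq hig₁
  have hig₂' := weight_int_mono hmg₂ hp hpq hig₂
  have hsubf : Integrable (fun v : E3 => |(f₁ - f₂) v| * (1 + ‖v‖^2) ^ ((3 + γ)/2)) :=
    sub_weight_int hmf₁ hmf₂ (3 + γ) hif₁' hif₂'
  have hsubg : Integrable (fun v : E3 => |(g₁ - g₂) v| * (1 + ‖v‖^2) ^ ((3 + γ)/2)) :=
    sub_weight_int hmg₁ hmg₂ (3 + γ) hig₁' hig₂'
  -- core applications
  obtain ⟨hFlam, heqlam, _⟩ := core (3 + γ) K hp hK.le (ζ lam) (hmeas lam) hzlam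
    f₁ g₁ hmf₁ hmg₁ hif₁' hig₁'
  obtain ⟨hF0, heq0, _⟩ := core (3 + γ) (K + K') hp (by linarith) ζ₀ hmeas0 hz0
    f₂ g₂ hmf₂ hmg₂ hif₂' hig₂'
  obtain ⟨hF1, heq1, hb1⟩ := core (3 + γ) K hp hK.le (ζ lam) (hmeas lam) hzlam
    (f₁ - f₂) g₁ (hmf₁.sub hmf₂) hmg₁ hsubf hig₁'
  obtain ⟨hF2, heq2, hb2⟩ := core (3 + γ) K hp hK.le (ζ lam) (hmeas lam) hzlam
    f₂ (g₁ - g₂) hmf₂ (hmg₁.sub hmg₂) hif₂' hsubg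
  have hmd : Measurable (fun s : ℝ => ζ lam s - ζ₀ s) := (hmeas lam).sub hmeas0
  obtain ⟨hF3, heq3, _⟩ := core (3 + γ) K' hp hK'.le (fun s => ζ lam s - ζ₀ s)
    hmd hzd f₂ g₂ hmf₂ hmg₂ hif₂' hig₂'
  set P := (volume : Measure E3).prod (volume : Measure E3) with hPdef
  have hF3' : Integrable (fun z : E3 × E3 =>
      f₂ z.1 * g₂ z.2 * (ζ lam (‖z.1 - z.2‖^2) - ζ₀ (‖z.1 - z.2‖^2))) P := hF3
  -- decomposition
  have key : dissip (ζ lam) f₁ g₁ - dissip ζ₀ f₂ g₂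
      = (∫ z : E3 × E3, (f₁ - f₂) z.1 * g₁ z.2 * ζ lam (‖z.1 - z.2‖^2) ∂P)
        + (∫ z : E3 × E3, f₂ z.1 * (g₁ - g₂) z.2 * ζ lam (‖z.1 - z.2‖^2) ∂P)
        + (∫ z : E3 × E3, f₂ z.1 * g₂ z.2 * (ζ lam (‖z.1 - z.2‖^2) - ζ₀ (‖z.1 - z.2‖^2)) ∂P) := by
    have h12 : Integrable (fun z : E3 × E3 => (f₁ - f₂) z.1 * g₁ z.2 * ζ lam (‖z.1 - z.2‖^2)
        + f₂ z.1 * (g₁ - g₂) z.2 * ζ lam (‖z.1 - z.2‖^2)) P := hF1.add hF2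
    rw [heqlam, heq0, ← integral_sub hFlam hF0]
    calc ∫ z : E3 × E3, (f₁ z.1 * g₁ z.2 * ζ lam (‖z.1 - z.2‖^2)
            - f₂ z.1 * g₂ z.2 * ζ₀ (‖z.1 - z.2‖^2)) ∂P
        = ∫ z : E3 × E3, (((f₁ - f₂) z.1 * g₁ z.2 * ζ lam (‖z.1 - z.2‖^2)
            + f₂ z.1 * (g₁ - g₂) z.2 * ζ lam (‖z.1 - z.2‖^2))
            + f₂ z.1 * g₂ z.2 * (ζ lam (‖z.1 - z.2‖^2) - ζ₀ (‖z.1 - z.2‖^2))) ∂P := by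
          apply integral_congr_ae
          filter_upwards with z
          simp only [Pi.sub_apply]
          ring
      _ = (∫ z : E3 × E3, ((f₁ - f₂) z.1 * g₁ z.2 * ζ lam (‖z.1 - z.2‖^2)
            + f₂ z.1 * (g₁ - g₂) z.2 * ζ lam (‖z.1 - z.2‖^2)) ∂P)
          + ∫ z : E3 × E3, f₂ z.1 * g₂ z.2 * (ζ lam (‖z.1 - z.2‖^2) - ζ₀ (‖z.1 - z.2‖^2)) ∂P :=
          integral_add h12 hF3'
      _ = _ := by rw [integral_add hF1 hF2]
  -- bound on the third integral
  have h0f : wL1 f₂ 0 = ∫ v : E3, |f₂ v| := by simp [wL1]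
  have h0g : wL1 g₂ 0 = ∫ v : E3, |g₂ v| := by simp [wL1]
  have hintf2 : Integrable (fun v : E3 => |f₂ v|) := abs_int hmf₂ hq0 hif₂
  have hintg2 : Integrable (fun v : E3 => |g₂ v|) := abs_int hmg₂ hq0 hig₂
  have hB3int : Integrable (fun z : E3 × E3 => ε * (|f₂ z.1| * |g₂ z.2|)
      + M * ((|f₂ z.1| * (1 + ‖z.1‖^2) ^ ((3 + γ + δ)/2))
        * (|g₂ z.2| * (1 + ‖z.2‖^2) ^ ((3 + γ + δ)/2)))) P :=
    ((hintf2.mul_prod hintg2).const_mul ε).add ((hif₂.mul_prod hig₂).const_mul M)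
  have hbound3 : ∀ z : E3 × E3,
      |f₂ z.1 * g₂ z.2 * (ζ lam (‖z.1 - z.2‖^2) - ζ₀ (‖z.1 - z.2‖^2))|
      ≤ ε * (|f₂ z.1| * |g₂ z.2|)
        + M * ((|f₂ z.1| * (1 + ‖z.1‖^2) ^ ((3 + γ + δ)/2))
          * (|g₂ z.2| * (1 + ‖z.2‖^2) ^ ((3 + γ + δ)/2))) := by
    intro z
    have habs0 : |f₂ z.1 * g₂ z.2 * (ζ lam (‖z.1 - z.2‖^2) - ζ₀ (‖z.1 - z.2‖^2))|
        = |f₂ z.1| * |g₂ z.2| * |ζ lam (‖z.1 - z.2‖^2) - ζ₀ (‖z.1 - z.2‖^2)| := by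
      rw [abs_mul, abs_mul]
    rcases le_or_gt ‖z.1 - z.2‖ R with hle | hlt
    · have hsz := hsup ‖z.1 - z.2‖ (norm_nonneg _) hle
      have hw : (0:ℝ) ≤ M * ((|f₂ z.1| * (1 + ‖z.1‖^2) ^ ((3 + γ + δ)/2))
          * (|g₂ z.2| * (1 + ‖z.2‖^2) ^ ((3 + γ + δ)/2))) :=
        mul_nonneg hM0 (by positivity)
      calc |f₂ z.1 * g₂ z.2 * (ζ lam (‖z.1 - z.2‖^2) - ζ₀ (‖z.1 - z.2‖^2))|
          = |f₂ z.1| * |g₂ z.2| * |ζ lam (‖z.1 - z.2‖^2) - ζ₀ (‖z.1 - z.2‖^2)| := habs0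
        _ ≤ |f₂ z.1| * |g₂ z.2| * ε := mul_le_mul_of_nonneg_left hsz (by positivity)
        _ = ε * (|f₂ z.1| * |g₂ z.2|) := by ring
        _ ≤ _ := le_add_of_nonneg_right hw
    · have hr0 : (0:ℝ) < ‖z.1 - z.2‖ := lt_trans hRpos hlt
      have hd1 : |ζ lam (‖z.1 - z.2‖^2) - ζ₀ (‖z.1 - z.2‖^2)|
          ≤ K' * ‖z.1 - z.2‖ ^ (3 + γ) := hdiff lam hlam1 _ hr0.le
      have e1 : ‖z.1 - z.2‖ ^ (3 + γ + δ) = ‖z.1 - z.2‖ ^ (3 + γ) * ‖z.1 - z.2‖ ^ δ :=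
        Real.rpow_add hr0 _ _
      have e2 : R ^ δ ≤ ‖z.1 - z.2‖ ^ δ := Real.rpow_le_rpow hRpos.le hlt.le hδ.le
      have h3 : (0:ℝ) ≤ ‖z.1 - z.2‖ ^ (3 + γ) := Real.rpow_nonneg (norm_nonneg _) _
      have hkey : K' * ‖z.1 - z.2‖ ^ (3 + γ) ≤ K' / R ^ δ * ‖z.1 - z.2‖ ^ (3 + γ + δ) := by
        rw [e1, div_mul_eq_mul_div, le_div_iff₀ hRδ]
        calc K' * ‖z.1 - z.2‖ ^ (3 + γ) * R ^ δ
            = (K' * ‖z.1 - z.2‖ ^ (3 + γ)) * R ^ δ := by ring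
          _ ≤ (K' * ‖z.1 - z.2‖ ^ (3 + γ)) * ‖z.1 - z.2‖ ^ δ :=
              mul_le_mul_of_nonneg_left e2 (mul_nonneg hK'.le h3)
          _ = K' * (‖z.1 - z.2‖ ^ (3 + γ) * ‖z.1 - z.2‖ ^ δ) := by ring
      have hwp := weight_pt (3 + γ + δ) hq0 z.1 z.2
      have hRd0 : (0:ℝ) ≤ K' / R ^ δ := div_nonneg hK'.le hRδ.le
      calc |f₂ z.1 * g₂ z.2 * (ζ lam (‖z.1 - z.2‖^2) - ζ₀ (‖z.1 - z.2‖^2))|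
          = |f₂ z.1| * |g₂ z.2| * |ζ lam (‖z.1 - z.2‖^2) - ζ₀ (‖z.1 - z.2‖^2)| := habs0
        _ ≤ |f₂ z.1| * |g₂ z.2| * (K' / R ^ δ * ‖z.1 - z.2‖ ^ (3 + γ + δ)) :=
            mul_le_mul_of_nonneg_left (le_trans hd1 hkey) (by positivity)
        _ ≤ |f₂ z.1| * |g₂ z.2| * (K' / R ^ δ * (2 ^ ((3 + γ + δ)/2)
              * ((1 + ‖z.1‖^2) ^ ((3 + γ + δ)/2) * (1 + ‖z.2‖^2) ^ ((3 + γ + δ)/2)))) :=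
            mul_le_mul_of_nonneg_left (mul_le_mul_of_nonneg_left hwp hRd0) (by positivity)
        _ = M * ((|f₂ z.1| * (1 + ‖z.1‖^2) ^ ((3 + γ + δ)/2))
              * (|g₂ z.2| * (1 + ‖z.2‖^2) ^ ((3 + γ + δ)/2))) := by
            rw [hMdef]; ring
        _ ≤ _ := le_add_of_nonneg_left (by positivity)
  have hBval : ∫ z : E3 × E3, (ε * (|f₂ z.1| * |g₂ z.2|)
      + M * ((|f₂ z.1| * (1 + ‖z.1‖^2) ^ ((3 + γ + δ)/2))
        * (|g₂ z.2| * (1 + ‖z.2‖^2) ^ ((3 + γ + δ)/2)))) ∂P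
      = ε * ((∫ v : E3, |f₂ v|) * (∫ v : E3, |g₂ v|))
        + M * (wL1 f₂ (3 + γ + δ) * wL1 g₂ (3 + γ + δ)) := by
    rw [integral_add ((hintf2.mul_prod hintg2).const_mul ε) ((hif₂.mul_prod hig₂).const_mul M),
      integral_const_mul, integral_const_mul,
      integral_prod_mul (f := fun v : E3 => |f₂ v|) (g := fun v : E3 => |g₂ v|),
      integral_prod_mul (f := fun v : E3 => |f₂ v| * (1 + ‖v‖^2) ^ ((3 + γ + δ)/2))
        (g := fun v : E3 => |g₂ v| * (1 + ‖v‖^2) ^ ((3 + γ + δ)/2))]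
    rfl
  have hb3 : |∫ z : E3 × E3, f₂ z.1 * g₂ z.2 * (ζ lam (‖z.1 - z.2‖^2) - ζ₀ (‖z.1 - z.2‖^2)) ∂P|
      ≤ ε * (wL1 f₂ 0 * wL1 g₂ 0) + ε * (wL1 f₂ (3 + γ + δ) * wL1 g₂ (3 + γ + δ)) := by
    have habs : |∫ z : E3 × E3, f₂ z.1 * g₂ z.2 * (ζ lam (‖z.1 - z.2‖^2) - ζ₀ (‖z.1 - z.2‖^2)) ∂P|
        ≤ ∫ z : E3 × E3, |f₂ z.1 * g₂ z.2 * (ζ lam (‖z.1 - z.2‖^2) - ζ₀ (‖z.1 - z.2‖^2))| ∂P := by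
      simpa only [Real.norm_eq_abs] using norm_integral_le_integral_norm (μ := P)
        (fun z : E3 × E3 => f₂ z.1 * g₂ z.2 * (ζ lam (‖z.1 - z.2‖^2) - ζ₀ (‖z.1 - z.2‖^2)))
    have hmono := integral_mono hF3'.abs hB3int hbound3
    have hlast : M * (wL1 f₂ (3 + γ + δ) * wL1 g₂ (3 + γ + δ))
        ≤ ε * (wL1 f₂ (3 + γ + δ) * wL1 g₂ (3 + γ + δ)) :=
      mul_le_mul_of_nonneg_right hM (mul_nonneg (wL1_nonneg _ _) (wL1_nonneg _ _))
    rw [h0f, h0g]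
    linarith [habs, hmono, hBval, hlast]
  -- bounds on the first two integrals
  have hb1' : |∫ z : E3 × E3, (f₁ - f₂) z.1 * g₁ z.2 * ζ lam (‖z.1 - z.2‖^2) ∂P|
      ≤ K * 2 ^ ((3 + γ)/2) * (wL1 (f₁ - f₂) (3 + γ) * wL1 g₁ (3 + γ)) := heq1 ▸ hb1
  have hb2' : |∫ z : E3 × E3, f₂ z.1 * (g₁ - g₂) z.2 * ζ lam (‖z.1 - z.2‖^2) ∂P|
      ≤ K * 2 ^ ((3 + γ)/2) * (wL1 f₂ (3 + γ) * wL1 (g₁ - g₂) (3 + γ)) := heq2 ▸ hb2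
  -- combine
  rw [key]
  have htri : |(∫ z : E3 × E3, (f₁ - f₂) z.1 * g₁ z.2 * ζ lam (‖z.1 - z.2‖^2) ∂P)
        + (∫ z : E3 × E3, f₂ z.1 * (g₁ - g₂) z.2 * ζ lam (‖z.1 - z.2‖^2) ∂P)
        + (∫ z : E3 × E3, f₂ z.1 * g₂ z.2 * (ζ lam (‖z.1 - z.2‖^2) - ζ₀ (‖z.1 - z.2‖^2)) ∂P)|
      ≤ |∫ z : E3 × E3, (f₁ - f₂) z.1 * g₁ z.2 * ζ lam (‖z.1 - z.2‖^2) ∂P|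
        + |∫ z : E3 × E3, f₂ z.1 * (g₁ - g₂) z.2 * ζ lam (‖z.1 - z.2‖^2) ∂P|
        + |∫ z : E3 × E3, f₂ z.1 * g₂ z.2 * (ζ lam (‖z.1 - z.2‖^2) - ζ₀ (‖z.1 - z.2‖^2)) ∂P| :=
    (abs_add_le _ _).trans (add_le_add_left (abs_add_le _ _) _)
  have hdist1 : K * 2 ^ ((3 + γ)/2) * (wL1 (f₁ - f₂) (3 + γ) * wL1 g₁ (3 + γ)
        + wL1 (g₁ - g₂) (3 + γ) * wL1 f₂ (3 + γ))
      = K * 2 ^ ((3 + γ)/2) * (wL1 (f₁ - f₂) (3 + γ) * wL1 g₁ (3 + γ))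
        + K * 2 ^ ((3 + γ)/2) * (wL1 f₂ (3 + γ) * wL1 (g₁ - g₂) (3 + γ)) := by ring
  have hdist2 : ε * (wL1 f₂ 0 * wL1 g₂ 0 + wL1 f₂ (3 + γ + δ) * wL1 g₂ (3 + γ + δ))
      = ε * (wL1 f₂ 0 * wL1 g₂ 0) + ε * (wL1 f₂ (3 + γ + δ) * wL1 g₂ (3 + γ + δ)) := by ring
  linarith [htri, hb1', hb2', hb3]
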